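/- For M > 0 and n ∈ ℕ ∪ {0}, the pair Φ⁽¹⁾(ρ) = (cos ρ)^M (1 + sin ρ)^{1/2} P_n^{(−1/2 + M, 1/2 + M)}(sin ρ), Φ⁽²⁾(ρ) = (cos ρ)^M (1 − sin ρ)^{1/2} P_n^{(1/2 + M, −1/2 + M)}(sin ρ) satisfies the spatial Dirac system dΦ⁽¹⁾/dρ + M sec ρ Φ⁽¹⁾ = ω Φ⁽²⁾ and −dΦ⁽²⁾/dρ + M sec ρ Φ⁽²⁾ = ω Φ⁽¹⁾ with ω = 1/2 + M + n, on (−π/2, π/2). -/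

import Mathlib

open Real Set

/-- Pochhammer symbol (x)_k = x(x+1)⋯(x+k−1). -/
noncomputable def poch (x : ℝ) (k : ℕ) : ℝ := ∏ i ∈ Finset.range k, (x + i)

/-- Jacobi polynomial P_n^{(a,b)}(x). -/
noncomputable def jacobiP (n : ℕ) (a b : ℝ) (x : ℝ) : ℝ :=
  (Real.Gamma (n + a + 1) / (n.factorial * Real.Gamma (a + 1))) *
    ∑ k ∈ Finset.range (n + 1),
      (poch (n + a + b + 1) k * poch (-(n : ℝ)) k / (poch (a + 1) k * k.factorial)) *
        ((1 - x) / 2) ^ k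

/-- First component of the Dirichlet type I mode. -/
noncomputable def PhiI1 (M : ℝ) (n : ℕ) (ρ : ℝ) : ℝ :=
  Real.cos ρ ^ M * Real.sqrt (1 + Real.sin ρ) * jacobiP n (M - 1/2) (M + 1/2) (Real.sin ρ)

/-- Second component of the Dirichlet type I mode. -/
noncomputable def PhiI2 (M : ℝ) (n : ℕ) (ρ : ℝ) : ℝ :=
  Real.cos ρ ^ M * Real.sqrt (1 - Real.sin ρ) * jacobiP n (M + 1/2) (M - 1/2) (Real.sin ρ)

noncomputable def jc (n : ℕ) (a b : ℝ) (k : ℕ) : ℝ :=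
  (Real.Gamma (n + a + 1) / (n.factorial * Real.Gamma (a + 1))) *
    (poch (n + a + b + 1) k * poch (-(n : ℝ)) k / (poch (a + 1) k * k.factorial))

lemma jacobiP_eq_sum (n : ℕ) (a b x : ℝ) :
    jacobiP n a b x = ∑ k ∈ Finset.range (n+1), jc n a b k * ((1 - x)/2)^k := by
  rw [jacobiP, Finset.mul_sum]
  exact Finset.sum_congr rfl fun k _ => by rw [jc]; ring

noncomputable def jacobiD (n : ℕ) (a b x : ℝ) : ℝ :=
  ∑ k ∈ Finset.range (n+1), jc n a b k * ((k : ℝ) * ((1 - x)/2)^(k-1) * (-(1/2) : ℝ))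

lemma hasDerivAt_jacobiP (n : ℕ) (a b x : ℝ) :
    HasDerivAt (fun y => jacobiP n a b y) (jacobiD n a b x) x := by
  have hfun : (fun y => jacobiP n a b y)
      = fun y => ∑ k ∈ Finset.range (n+1), jc n a b k * ((1 - y)/2)^k := by
    funext y; exact jacobiP_eq_sum n a b y
  rw [hfun, jacobiD]
  apply HasDerivAt.fun_sum
  intro k _
  have h0 : HasDerivAt (fun y : ℝ => (1 - y)/2) (-(1/2) : ℝ) x := by
    have := ((hasDerivAt_id' x).const_sub 1).div_const 2
    exact this.congr_deriv (by norm_num)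
  exact (h0.pow k).const_mul _

lemma poch_zero (x : ℝ) : poch x 0 = 1 := by simp [poch]

lemma poch_succ (x : ℝ) (k : ℕ) : poch x (k+1) = poch x k * (x + k) := Finset.prod_range_succ _ _

lemma poch_pos {x : ℝ} (hx : 0 < x) (k : ℕ) : 0 < poch x k :=
  Finset.prod_pos fun i _ => by positivity

lemma poch_neg_nat (n : ℕ) : poch (-(n : ℝ)) (n+1) = 0 :=
  Finset.prod_eq_zero (Finset.self_mem_range_succ n) (by simp)

lemma poch_shift (x : ℝ) (k : ℕ) : poch (x+1) k * x = poch x k * (x + k) := by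
  induction k with
  | zero => simp [poch_zero]
  | succ k ih =>
    rw [poch_succ, poch_succ]
    push_cast
    linear_combination (x + 1 + k) * ih

section coeffs
variable {a : ℝ} (ha : -1 < a) (n k : ℕ)
include ha

lemma F1 : jc n (a+1) a k * ((a+1) + k) = ((n:ℝ) + a + 1) * jc n a (a+1) k := by
  have ha1 : (0:ℝ) < a + 1 := by linarith
  have hna : (0:ℝ) < n + a + 1 := by have : (0:ℝ) ≤ (n:ℝ) := n.cast_nonneg; linarith
  have hG1 : Real.Gamma (a+1) ≠ 0 := (Real.Gamma_pos_of_pos ha1).ne'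
  have hG2 : Real.Gamma (n+a+1) ≠ 0 := (Real.Gamma_pos_of_pos hna).ne'
  have hp1 : poch (a+1) k ≠ 0 := (poch_pos ha1 k).ne'
  have hp2 : poch (a+1+1) k ≠ 0 := (poch_pos (by linarith) k).ne'
  have hfac : (k.factorial : ℝ) ≠ 0 := Nat.cast_ne_zero.mpr k.factorial_ne_zero
  have hnfac : (n.factorial : ℝ) ≠ 0 := Nat.cast_ne_zero.mpr n.factorial_ne_zero
  have e1 : (n:ℝ) + (a+1) + 1 = (n + a + 1) + 1 := by ring
  have e2 : (a+1) + 1 = (a+1) + 1 := rfl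
  have eG1 : Real.Gamma ((n:ℝ) + (a+1) + 1) = ((n:ℝ)+a+1) * Real.Gamma ((n:ℝ)+a+1) := by
    rw [e1, Real.Gamma_add_one hna.ne']
  have eG2 : Real.Gamma ((a+1) + 1) = (a+1) * Real.Gamma (a+1) := Real.Gamma_add_one ha1.ne'
  have ep : poch ((a+1)+1) k * (a+1) = poch (a+1) k * ((a+1) + k) := poch_shift (a+1) k
  have es : (n:ℝ) + (a+1) + a + 1 = n + a + (a+1) + 1 := by ring
  rw [jc, jc, eG1, eG2, es]
  field_simp
  linear_combination (-(poch ((n:ℝ)+a+(a+1)+1) k * poch (-(n:ℝ)) k)) * ep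

lemma F2 : ((k:ℝ)+1) * jc n a (a+1) (k+1) * ((a+1) + k)
    = (((n:ℝ) + a + (a+1) + 1) + k) * ((k:ℝ) - n) * jc n a (a+1) k := by
  have ha1 : (0:ℝ) < a + 1 := by linarith
  have hp1 : poch (a+1) k ≠ 0 := (poch_pos ha1 k).ne'
  have hfac : (k.factorial : ℝ) ≠ 0 := Nat.cast_ne_zero.mpr k.factorial_ne_zero
  rw [jc, jc, poch_succ, poch_succ, poch_succ, Nat.factorial_succ]
  push_cast
  field_simp
  ring

lemma T1 : ((k:ℝ)+1) * jc n a (a+1) (k+1)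
    = ((k:ℝ) + (a+1)) * jc n a (a+1) k - ((n:ℝ) + a + 1) * jc n (a+1) a k := by
  have hne : ((a+1) + (k:ℝ)) ≠ 0 := by have : (0:ℝ) ≤ (k:ℝ) := k.cast_nonneg; intro h; linarith [h]
  apply mul_right_cancel₀ hne
  linear_combination F2 ha n k + ((n:ℝ) + a + 1) * F1 ha n k

end coeffs

lemma jc_top_zero (n : ℕ) (a b : ℝ) : jc n a b (n+1) = 0 := by
  rw [jc, poch_neg_nat]; simp

lemma keyP {a : ℝ} (ha : -1 < a) (n : ℕ) (x : ℝ) :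
    (1+x) * jacobiD n a (a+1) x
      = ((n:ℝ)+a+1) * jacobiP n (a+1) a x - (a+1) * jacobiP n a (a+1) x := by
  have hx : 1 + x = 2 - 2*((1-x)/2) := by ring
  rw [jacobiD, Finset.mul_sum]
  have e1 : ∀ k ∈ Finset.range (n+1),
      (1+x) * (jc n a (a+1) k * ((k:ℝ) * ((1-x)/2)^(k-1) * (-(1/2))))
      = -((k:ℝ)) * jc n a (a+1) k * ((1-x)/2)^(k-1)
        + (k:ℝ) * jc n a (a+1) k * ((1-x)/2)^k := by
    intro k _
    cases k with
    | zero => simp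
    | succ j =>
      simp only [Nat.add_sub_cancel, pow_succ]
      push_cast
      ring
  rw [Finset.sum_congr rfl e1, Finset.sum_add_distrib]
  have e2 : ∑ k ∈ Finset.range (n+1), -((k:ℝ)) * jc n a (a+1) k * ((1-x)/2)^(k-1)
      = ∑ k ∈ Finset.range (n+1), -(((k:ℝ)+1) * jc n a (a+1) (k+1)) * ((1-x)/2)^k := by
    rw [Finset.sum_range_succ' (fun k => -((k:ℝ)) * jc n a (a+1) k * ((1-x)/2)^(k-1)) n,
        Finset.sum_range_succ (fun k => -(((k:ℝ)+1) * jc n a (a+1) (k+1)) * ((1-x)/2)^k),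
        jc_top_zero]
    simp only [Nat.cast_zero, neg_zero, zero_mul, add_zero, Nat.add_sub_cancel, mul_zero,
      zero_mul, neg_zero, add_zero]
    refine Finset.sum_congr rfl fun k _ => by push_cast; ring
  rw [e2, jacobiP_eq_sum, jacobiP_eq_sum, Finset.mul_sum, Finset.mul_sum,
    ← Finset.sum_sub_distrib, ← Finset.sum_add_distrib]
  refine Finset.sum_congr rfl fun k _ => ?_
  have h := T1 ha n k
  linear_combination (-(((1-x)/2)^k)) * h

lemma keyQ {a : ℝ} (ha : -1 < a) (n : ℕ) (x : ℝ) :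
    (1-x) * jacobiD n (a+1) a x
      = (a+1) * jacobiP n (a+1) a x - ((n:ℝ)+a+1) * jacobiP n a (a+1) x := by
  rw [jacobiD, Finset.mul_sum, jacobiP_eq_sum, jacobiP_eq_sum, Finset.mul_sum, Finset.mul_sum,
    ← Finset.sum_sub_distrib]
  refine Finset.sum_congr rfl fun k _ => ?_
  have h := F1 ha n k
  cases k with
  | zero =>
    simp only [Nat.cast_zero, pow_zero] at *
    linear_combination -h
  | succ j =>
    simp only [Nat.add_sub_cancel] at *
    have hpow : ((1-x)/2)^(j+1) = ((1-x)/2)^j * ((1-x)/2) := pow_succ _ _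
    push_cast at h ⊢
    linear_combination (-(((1-x)/2)^(j+1))) * h

/-- For M > 0, the Dirichlet type I mode pair satisfies the spatial Dirac system
with ω = 1/2 + M + n on (−π/2, π/2). -/
theorem stmt14 (M : ℝ) (hM : 0 < M) (n : ℕ) :
    (∀ ρ ∈ Ioo (-(π/2)) (π/2),
      deriv (PhiI1 M n) ρ + M * (Real.cos ρ)⁻¹ * PhiI1 M n ρ
        = (1/2 + M + n) * PhiI2 M n ρ) ∧
    (∀ ρ ∈ Ioo (-(π/2)) (π/2),
      -deriv (PhiI2 M n) ρ + M * (Real.cos ρ)⁻¹ * PhiI2 M n ρ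
        = (1/2 + M + n) * PhiI1 M n ρ) := by
  have ha : (-1 : ℝ) < M - 1/2 := by linarith
  have hb : M + 1/2 = (M - 1/2) + 1 := by ring
  constructor
  · intro ρ hρ
    have hc : 0 < Real.cos ρ := Real.cos_pos_of_mem_Ioo hρ
    have hpyth := Real.sin_sq_add_cos_sq ρ
    have h1s : 0 < 1 + Real.sin ρ := by nlinarith [Real.neg_one_le_sin ρ, Real.sin_le_one ρ]
    have h2s : 0 < 1 - Real.sin ρ := by nlinarith [Real.neg_one_le_sin ρ, Real.sin_le_one ρ]
    have hA : HasDerivAt (fun y => Real.cos y ^ M)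
        (-Real.sin ρ * M * Real.cos ρ ^ (M-1)) ρ :=
      (Real.hasDerivAt_cos ρ).rpow_const (Or.inl hc.ne')
    have hu : HasDerivAt (fun y => Real.sqrt (1 + Real.sin y))
        (Real.cos ρ / (2 * Real.sqrt (1 + Real.sin ρ))) ρ :=
      ((Real.hasDerivAt_sin ρ).const_add 1).sqrt h1s.ne'
    have hP : HasDerivAt (fun y => jacobiP n (M-1/2) ((M-1/2)+1) (Real.sin y))
        (jacobiD n (M-1/2) ((M-1/2)+1) (Real.sin ρ) * Real.cos ρ) ρ :=
      (hasDerivAt_jacobiP n (M-1/2) ((M-1/2)+1) (Real.sin ρ)).comp ρ (Real.hasDerivAt_sin ρ)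
    have hfun : PhiI1 M n = fun y =>
        (Real.cos y ^ M * Real.sqrt (1 + Real.sin y)) * jacobiP n (M-1/2) ((M-1/2)+1) (Real.sin y) := by
      funext y; rw [PhiI1, hb]
    have hΦ : HasDerivAt (PhiI1 M n)
        ((-Real.sin ρ * M * Real.cos ρ ^ (M-1) * Real.sqrt (1 + Real.sin ρ)
          + Real.cos ρ ^ M * (Real.cos ρ / (2 * Real.sqrt (1 + Real.sin ρ))))
            * jacobiP n (M-1/2) ((M-1/2)+1) (Real.sin ρ)
          + (Real.cos ρ ^ M * Real.sqrt (1 + Real.sin ρ))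
            * (jacobiD n (M-1/2) ((M-1/2)+1) (Real.sin ρ) * Real.cos ρ)) ρ := by
      rw [hfun]; exact (hA.mul hu).mul hP
    rw [hΦ.deriv]
    simp only [hfun, PhiI2, hb]
    set s := Real.sin ρ
    set c := Real.cos ρ
    set u := Real.sqrt (1 + s) with hudef
    set v := Real.sqrt (1 - s) with hvdef
    set P := jacobiP n (M-1/2) ((M-1/2)+1) s
    set Q := jacobiP n ((M-1/2)+1) (M-1/2) s
    set D := jacobiD n (M-1/2) ((M-1/2)+1) s
    have key : (1+s) * D = ((n:ℝ) + (M-1/2) + 1) * Q - ((M-1/2)+1) * P := keyP ha n s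
    have hu0 : 0 < u := Real.sqrt_pos.mpr h1s
    have hv0 : 0 < v := Real.sqrt_pos.mpr h2s
    have hu2 : u^2 = 1 + s := Real.sq_sqrt h1s.le
    have hv2 : v^2 = 1 - s := Real.sq_sqrt h2s.le
    have huv : c = u * v := by
      rw [hudef, hvdef, ← Real.sqrt_mul h1s.le]
      rw [show (1+s)*(1-s) = c^2 by nlinarith]
      exact (Real.sqrt_sq hc.le).symm
    have hc1 : c ^ (M-1) = c ^ M / c := Real.rpow_sub_one hc.ne' M
    have hA0 : 0 < c ^ M := Real.rpow_pos_of_pos hc M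
    set A := c ^ M
    rw [hc1, huv]
    field_simp
    linear_combination (2*v^2) * key + (2*v^2*D) * hu2 + (-2*M*P) * hv2
  · intro ρ hρ
    have hc : 0 < Real.cos ρ := Real.cos_pos_of_mem_Ioo hρ
    have hpyth := Real.sin_sq_add_cos_sq ρ
    have h1s : 0 < 1 + Real.sin ρ := by nlinarith [Real.neg_one_le_sin ρ, Real.sin_le_one ρ]
    have h2s : 0 < 1 - Real.sin ρ := by nlinarith [Real.neg_one_le_sin ρ, Real.sin_le_one ρ]
    have hA : HasDerivAt (fun y => Real.cos y ^ M)
        (-Real.sin ρ * M * Real.cos ρ ^ (M-1)) ρ :=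
      (Real.hasDerivAt_cos ρ).rpow_const (Or.inl hc.ne')
    have hv : HasDerivAt (fun y => Real.sqrt (1 - Real.sin y))
        (-Real.cos ρ / (2 * Real.sqrt (1 - Real.sin ρ))) ρ :=
      ((Real.hasDerivAt_sin ρ).const_sub 1).sqrt h2s.ne'
    have hQ : HasDerivAt (fun y => jacobiP n ((M-1/2)+1) (M-1/2) (Real.sin y))
        (jacobiD n ((M-1/2)+1) (M-1/2) (Real.sin ρ) * Real.cos ρ) ρ :=
      (hasDerivAt_jacobiP n ((M-1/2)+1) (M-1/2) (Real.sin ρ)).comp ρ (Real.hasDerivAt_sin ρ)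
    have hfun : PhiI2 M n = fun y =>
        (Real.cos y ^ M * Real.sqrt (1 - Real.sin y)) * jacobiP n ((M-1/2)+1) (M-1/2) (Real.sin y) := by
      funext y; rw [PhiI2, hb]
    have hΦ : HasDerivAt (PhiI2 M n)
        ((-Real.sin ρ * M * Real.cos ρ ^ (M-1) * Real.sqrt (1 - Real.sin ρ)
          + Real.cos ρ ^ M * (-Real.cos ρ / (2 * Real.sqrt (1 - Real.sin ρ))))
            * jacobiP n ((M-1/2)+1) (M-1/2) (Real.sin ρ)
          + (Real.cos ρ ^ M * Real.sqrt (1 - Real.sin ρ))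
            * (jacobiD n ((M-1/2)+1) (M-1/2) (Real.sin ρ) * Real.cos ρ)) ρ := by
      rw [hfun]; exact (hA.mul hv).mul hQ
    rw [hΦ.deriv]
    simp only [hfun, PhiI1, hb]
    set s := Real.sin ρ
    set c := Real.cos ρ
    set u := Real.sqrt (1 + s) with hudef
    set v := Real.sqrt (1 - s) with hvdef
    set P := jacobiP n (M-1/2) ((M-1/2)+1) s
    set Q := jacobiP n ((M-1/2)+1) (M-1/2) s
    set DQ := jacobiD n ((M-1/2)+1) (M-1/2) s
    have key : (1-s) * DQ = ((M-1/2)+1) * Q - ((n:ℝ) + (M-1/2) + 1) * P := keyQ ha n s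
    have hu0 : 0 < u := Real.sqrt_pos.mpr h1s
    have hv0 : 0 < v := Real.sqrt_pos.mpr h2s
    have hu2 : u^2 = 1 + s := Real.sq_sqrt h1s.le
    have hv2 : v^2 = 1 - s := Real.sq_sqrt h2s.le
    have huv : c = u * v := by
      rw [hudef, hvdef, ← Real.sqrt_mul h1s.le]
      rw [show (1+s)*(1-s) = c^2 by nlinarith]
      exact (Real.sqrt_sq hc.le).symm
    have hc1 : c ^ (M-1) = c ^ M / c := Real.rpow_sub_one hc.ne' M
    have hA0 : 0 < c ^ M := Real.rpow_pos_of_pos hc M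
    set A := c ^ M
    rw [hc1, huv]
    field_simp
    linear_combination (-2*u^2) * key + (-2*M*Q) * hu2 + (-2*u^2*DQ) * hv2
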